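/- Separability is a three-space property in topological groups: if N is a closed subgroup of a topological group C such that N is separable and the quotient space C/N (with the quotient topology under the canonical open map) is separable, then C is separable. -/

import Mathlib

open scoped Pointwise


/-- Separability is a three-space property in topological groups: if `N` is a closed
subgroup of the (Hausdorff) topological group `C` such that `N` and the quotient
space `C ⧸ N` are separable, then `C` is separable. -/
theorem separable_of_separable_closed_subgroup_and_quotient
    (C : Type*) [Group C] [TopologicalSpace C] [IsTopologicalGroup C] [T2Space C]
    (N : Subgroup C) (hN : IsClosed (N : Set C))
    (h1 : TopologicalSpace.SeparableSpace N)
    (h2 : TopologicalSpace.SeparableSpace (C ⧸ N)) :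
    TopologicalSpace.SeparableSpace C := by
  obtain ⟨D, Dc, Dd⟩ := TopologicalSpace.exists_countable_dense N
  obtain ⟨E, Ec, Ed⟩ := TopologicalSpace.exists_countable_dense (C ⧸ N)
  set S : Set C := (fun e : C ⧸ N => Quotient.out e) '' E with hS
  refine ⟨⟨S * (Subtype.val '' D), by rw [← Set.image2_mul]; exact (Ec.image _).image2 (Dc.image _) _, ?_⟩⟩
  rw [dense_iff_inter_open]
  rintro U hU ⟨x, hx⟩
  have hUo : IsOpen (QuotientGroup.mk '' U : Set (C ⧸ N)) :=
    QuotientGroup.isOpenMap_coe U hU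
  obtain ⟨e, ⟨⟨u, hu, hue⟩, heE⟩⟩ :=
    Ed.inter_open_nonempty _ hUo ⟨QuotientGroup.mk x, x, hx, rfl⟩
  set s : C := Quotient.out e with hs
  have hse : QuotientGroup.mk s = e := QuotientGroup.out_eq' e
  have hmk : (QuotientGroup.mk s : C ⧸ N) = QuotientGroup.mk u := hse.trans hue.symm
  have hn : s⁻¹ * u ∈ N := QuotientGroup.eq.mp hmk
  set W : Set N := {n : N | s * (n : C) ∈ U} with hW
  have hWo : IsOpen W := (continuous_const.mul continuous_subtype_val).isOpen_preimage U hU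
  have hWne : W.Nonempty := ⟨⟨s⁻¹ * u, hn⟩, by simp [hW, mul_inv_cancel_left, hu]⟩
  obtain ⟨d, hdW, hdD⟩ := Dd.inter_open_nonempty _ hWo hWne
  exact ⟨s * (d : C), hdW,
    Set.mul_mem_mul ⟨e, heE, rfl⟩ ⟨d, hdD, rfl⟩⟩
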